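/- Let C and D be closed function clones on sets Ω and Ω' with C weakly directed (for all a, b ∈ Ω there exist unary f, g ∈ C and c ∈ Ω with f(c) = a, g(c) = b). If ξ : C → D is a clone isomorphism whose restriction to unary functions is an open map (with respect to the pointwise convergence topologies), then ξ is an open map. -/
import Mathlib


/-- A function clone on Ω. -/
def IsClone {Ω : Type*} (C : ∀ n : ℕ, Set ((Fin n → Ω) → Ω)) : Prop :=
  (∀ (n : ℕ) (i : Fin n), (fun x : Fin n → Ω => x i) ∈ C n) ∧
  (∀ (n m : ℕ) (f : (Fin n → Ω) → Ω), f ∈ C n → ∀ g : Fin n → (Fin m → Ω) → Ω,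
    (∀ i, g i ∈ C m) → (fun x : Fin m → Ω => f fun i => g i x) ∈ C m)

/-- A clone homomorphism. -/
def IsCloneHom {Ω Ω' : Type*} (C : ∀ n : ℕ, Set ((Fin n → Ω) → Ω))
    (D : ∀ n : ℕ, Set ((Fin n → Ω') → Ω'))
    (ξ : ∀ n : ℕ, ((Fin n → Ω) → Ω) → ((Fin n → Ω') → Ω')) : Prop :=
  (∀ n : ℕ, Set.MapsTo (ξ n) (C n) (D n)) ∧
  (∀ (n : ℕ) (i : Fin n), ξ n (fun x => x i) = fun x => x i) ∧
  (∀ (n m : ℕ) (f : (Fin n → Ω) → Ω), f ∈ C n → ∀ g : Fin n → (Fin m → Ω) → Ω,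
    (∀ i, g i ∈ C m) →
    ξ m (fun x => f fun i => g i x) = fun x => ξ n f fun i => ξ m (g i) x)


lemma tupleEncode {Ω : Type*} (C : ∀ n : ℕ, Set ((Fin n → Ω) → Ω)) (hC : IsClone C)
    (hdir : ∀ a b : Ω, ∃ f ∈ C 1, ∃ g ∈ C 1, ∃ c : Ω,
      f (fun _ => c) = a ∧ g (fun _ => c) = b) (c₀ : Ω) :
    ∀ (n : ℕ) (a : Fin n → Ω), ∃ e : Fin n → ((Fin 1 → Ω) → Ω),
      (∀ i, e i ∈ C 1) ∧ ∃ c : Ω, ∀ i, e i (fun _ => c) = a i := by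
  intro n
  induction n with
  | zero => exact fun a => ⟨Fin.elim0, fun i => i.elim0, c₀, fun i => i.elim0⟩
  | succ n ih =>
    intro a
    obtain ⟨e, he, c, hc⟩ := ih (fun i => a i.castSucc)
    obtain ⟨u, hu, v, hv, d, hud, hvd⟩ := hdir c (a (Fin.last n))
    refine ⟨Fin.lastCases v (fun i => fun x => e i (fun _ => u x)), ?_, d, ?_⟩
    · intro i
      refine Fin.lastCases ?_ ?_ i
      · simpa using hv
      · intro i
        have := hC.2 1 1 (e i) (he i) (fun _ => u) (fun _ => hu)
        simpa using this
    · intro i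
      refine Fin.lastCases ?_ ?_ i
      · simpa using hvd
      · intro i
        simp only [Fin.lastCases_castSucc]
        rw [hud]
        exact hc i

lemma singleOpen {Ω Ω' : Type*} [TopologicalSpace Ω] [DiscreteTopology Ω]
    [TopologicalSpace Ω'] [DiscreteTopology Ω']
    (C : ∀ n : ℕ, Set ((Fin n → Ω) → Ω)) (D : ∀ n : ℕ, Set ((Fin n → Ω') → Ω'))
    (hC : IsClone C) (hD : IsClone D)
    (hdir : ∀ a b : Ω, ∃ f ∈ C 1, ∃ g ∈ C 1, ∃ c : Ω,
      f (fun _ => c) = a ∧ g (fun _ => c) = b)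
    (ξ : ∀ n : ℕ, ((Fin n → Ω) → Ω) → ((Fin n → Ω') → Ω'))
    (hξ : IsCloneHom C D ξ)
    (hbij : ∀ n : ℕ, Function.Bijective (Set.MapsTo.restrict (ξ n) (C n) (D n) (hξ.1 n)))
    (hopen1 : IsOpenMap (Set.MapsTo.restrict (ξ 1) (C 1) (D 1) (hξ.1 1)))
    (n : ℕ) (a : Fin n → Ω) (b : Ω) (c₀ : Ω) :
    IsOpen (Set.MapsTo.restrict (ξ n) (C n) (D n) (hξ.1 n) ''
      {f : ↥(C n) | f.val a = b}) := by
  obtain ⟨e, he, c, hc⟩ := tupleEncode C hC hdir c₀ n a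
  set ε : Fin n → ((Fin 1 → Ω') → Ω') := fun i => ξ 1 (e i) with hε_def
  have hε : ∀ i, ε i ∈ D 1 := fun i => hξ.1 1 (he i)
  set Ψ : ↥(D n) → ↥(D 1) :=
    fun g => ⟨fun x => g.val (fun i => ε i x), hD.2 n 1 g.val g.2 ε hε⟩ with hΨ_def
  have hΨcont : Continuous Ψ := by
    apply Continuous.subtype_mk
    apply continuous_pi
    intro x
    exact (continuous_apply (fun i => ε i x)).comp continuous_subtype_val
  set V₀ : Set ↥(D 1) := Set.MapsTo.restrict (ξ 1) (C 1) (D 1) (hξ.1 1) ''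
    {h : ↥(C 1) | h.val (fun _ => c) = b} with hV₀_def
  have hV₀open : IsOpen V₀ := by
    apply hopen1
    have : {h : ↥(C 1) | h.val (fun _ => c) = b} =
        ((fun h : ↥(C 1) => h.val (fun _ => c)) ⁻¹' {b}) := rfl
    rw [this]
    exact (((continuous_apply (fun _ => c)).comp continuous_subtype_val)).isOpen_preimage _
      (isOpen_discrete _)
  have key : ∀ f : ↥(C n),
      ξ 1 (fun x => f.val (fun i => e i x)) = fun x => ξ n f.val (fun i => ε i x) :=
    fun f => hξ.2.2 n 1 f.val f.2 e he
  have himg : Set.MapsTo.restrict (ξ n) (C n) (D n) (hξ.1 n) ''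
      {f : ↥(C n) | f.val a = b} = Ψ ⁻¹' V₀ := by
    ext y
    constructor
    · rintro ⟨f, hf, rfl⟩
      refine ⟨⟨fun x => f.val (fun i => e i x), hC.2 n 1 f.val f.2 e he⟩, ?_, ?_⟩
      · show (fun x => f.val (fun i => e i x)) (fun _ => c) = b
        have : (fun i => e i (fun _ => c)) = a := funext hc
        simp only [this]
        exact hf
      · apply Subtype.ext
        exact key f
    · intro hy
      obtain ⟨h, hh, hmatch⟩ := hy
      obtain ⟨f, rfl⟩ := (hbij n).2 y
      refine ⟨f, ?_, rfl⟩
      have heq : Set.MapsTo.restrict (ξ 1) (C 1) (D 1) (hξ.1 1) h =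
          Set.MapsTo.restrict (ξ 1) (C 1) (D 1) (hξ.1 1)
            ⟨fun x => f.val (fun i => e i x), hC.2 n 1 f.val f.2 e he⟩ := by
        apply Subtype.ext
        have h1 : (Set.MapsTo.restrict (ξ 1) (C 1) (D 1) (hξ.1 1) h).val =
            ξ 1 h.val := rfl
        rw [h1]
        have h2 : ξ 1 h.val = (Ψ (Set.MapsTo.restrict (ξ n) (C n) (D n) (hξ.1 n) f)).val :=
          congrArg Subtype.val hmatch
        rw [h2]
        exact (key f).symm
      have := (hbij 1).1 heq
      have hval : h.val = fun x => f.val (fun i => e i x) := congrArg Subtype.val this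
      have : f.val (fun i => e i (fun _ => c)) = b := by
        rw [← hh, hval]
      rwa [funext hc] at this
  rw [himg]
  exact hV₀open.preimage hΨcont

/-- Let C and D be closed function clones with C weakly directed. If
ξ : C → D is a clone isomorphism whose restriction to unary functions is an open map
(pointwise convergence topologies), then ξ is an open map. -/
theorem stmt_18 {Ω Ω' : Type*} [TopologicalSpace Ω] [DiscreteTopology Ω]
    [TopologicalSpace Ω'] [DiscreteTopology Ω']
    (C : ∀ n : ℕ, Set ((Fin n → Ω) → Ω)) (D : ∀ n : ℕ, Set ((Fin n → Ω') → Ω'))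
    (hC : IsClone C) (hD : IsClone D)
    (hCclosed : ∀ n : ℕ, IsClosed (C n)) (hDclosed : ∀ n : ℕ, IsClosed (D n))
    (hdir : ∀ a b : Ω, ∃ f ∈ C 1, ∃ g ∈ C 1, ∃ c : Ω,
      f (fun _ => c) = a ∧ g (fun _ => c) = b)
    (ξ : ∀ n : ℕ, ((Fin n → Ω) → Ω) → ((Fin n → Ω') → Ω'))
    (hξ : IsCloneHom C D ξ)
    (hbij : ∀ n : ℕ, Function.Bijective (Set.MapsTo.restrict (ξ n) (C n) (D n) (hξ.1 n)))
    (hopen1 : IsOpenMap (Set.MapsTo.restrict (ξ 1) (C 1) (D 1) (hξ.1 1))) :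
    ∀ n : ℕ, IsOpenMap (Set.MapsTo.restrict (ξ n) (C n) (D n) (hξ.1 n)) := by
  intro n U hU
  rw [isOpen_iff_forall_mem_open]
  rintro y ⟨f, hfU, rfl⟩
  obtain ⟨U', hU'open, hU'eq⟩ := isOpen_induced_iff.mp hU
  have hfU' : f.val ∈ U' := by rw [← hU'eq] at hfU; exact hfU
  obtain ⟨I, u, hu, hsub⟩ := isOpen_pi_iff.mp hU'open f.val hfU'
  set T := Set.MapsTo.restrict (ξ n) (C n) (D n) (hξ.1 n) with hT
  refine ⟨⋂ a ∈ I, T '' {g : ↥(C n) | g.val a = f.val a}, ?_, ?_, ?_⟩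
  · intro y hy
    obtain ⟨g, rfl⟩ := (hbij n).2 y
    refine ⟨g, ?_, rfl⟩
    have hg : ∀ a ∈ I, g.val a = f.val a := by
      intro a ha
      obtain ⟨g', hg', hgg⟩ := Set.mem_iInter₂.mp hy a ha
      rw [← (hbij n).1 hgg]
      exact hg'
    rw [← hU'eq]
    apply hsub
    intro a ha
    rw [hg a ha]
    exact (hu a ha).2
  · exact Set.Finite.isOpen_biInter I.finite_toSet
      (fun a _ => singleOpen C D hC hD hdir ξ hξ hbij hopen1 n a (f.val a) (f.val a))
  · exact Set.mem_iInter₂.mpr fun a ha => ⟨f, rfl, rfl⟩
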